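/- arXiv:2101.04069 — 6 statements merged into one kernel-verified Lean document; each statement's English description precedes it below -/
import Mathlib

section
/- Let n ∈ ℕ, F ⊆ ℕ^n, and M := Min(J_F). Let P ⊆ M and L ⊆ Fin n be such that [γ] ⊆ L for every γ ∈ P. Let α ∈ F and k ∈ [α] with k ∉ L, and suppose that β := α − e_k lies in M \ P and has minimal degree there, i.e. |β| ≤ |β'| for every β' ∈ M \ P. Then α − e_i ∈ M \ P for every i ∈ [α]; in particular, α contributes |[α]| pairwise distinct elements of M \ P, each of degree |α| − 1. -/
/-- `δ(F)`: the set of all `α - e_i` for `α ∈ F` and `i` with `α i > 0`. -/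
def deltaSet {n : ℕ} (F : Set (Fin n → ℕ)) : Set (Fin n → ℕ) :=
  {γ | ∃ α ∈ F, ∃ i : Fin n, α i ≠ 0 ∧ γ = α - Pi.single i 1}

/-- `J_F`: the semigroup ideal of `ℕ^n` generated by `δ(F)`. -/
def semigroupIdeal {n : ℕ} (F : Set (Fin n → ℕ)) : Set (Fin n → ℕ) :=
  {β | ∃ γ ∈ deltaSet F, γ ≤ β}

/-- The set of minimal elements of a subset of `ℕ^n`. -/
def minSet {n : ℕ} (S : Set (Fin n → ℕ)) : Set (Fin n → ℕ) :=
  {β ∈ S | ∀ β' ∈ S, β' ≤ β → β' = β}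

/-- The degree `|α| = Σ_i α_i`. -/
def deg {n : ℕ} (α : Fin n → ℕ) : ℕ := ∑ i, α i

lemma deg_mono {n : ℕ} {a b : Fin n → ℕ} (h : a ≤ b) : deg a ≤ deg b :=
  Finset.sum_le_sum fun i _ => h i

lemma eq_of_le_of_deg_le {n : ℕ} {a b : Fin n → ℕ} (h : a ≤ b) (hd : deg b ≤ deg a) : a = b := by
  by_contra hne
  obtain ⟨j, hj⟩ := Function.ne_iff.mp hne
  have : deg a < deg b :=
    Finset.sum_lt_sum (fun i _ => h i) ⟨j, Finset.mem_univ j, lt_of_le_of_ne (h j) hj⟩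
  omega

lemma single_le_apply {n : ℕ} {a : Fin n → ℕ} {i : Fin n} (h : a i ≠ 0) (j : Fin n) :
    (Pi.single i 1 : Fin n → ℕ) j ≤ a j := by
  rcases eq_or_ne j i with rfl | hne
  · simp only [Pi.single_eq_same]; omega
  · simp [Pi.single_eq_of_ne hne]

lemma deg_sub_single {n : ℕ} {a : Fin n → ℕ} {i : Fin n} (h : a i ≠ 0) :
    deg (a - Pi.single i 1) = deg a - 1 := by
  have key : deg (a - Pi.single i 1) + ∑ j, (Pi.single i 1 : Fin n → ℕ) j = deg a := by
    rw [deg, ← Finset.sum_add_distrib]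
    exact Finset.sum_congr rfl fun j _ => by
      have := single_le_apply h j
      simp only [Pi.sub_apply]; omega
  have hs : ∑ j, (Pi.single i 1 : Fin n → ℕ) j = 1 := Finset.sum_pi_single' i 1 Finset.univ ▸ by
    simp
  rw [hs] at key; omega

lemma exists_min {n : ℕ} (F : Set (Fin n → ℕ)) :
    ∀ d (b : Fin n → ℕ), deg b ≤ d → b ∈ semigroupIdeal F →
      ∃ m ∈ minSet (semigroupIdeal F), m ≤ b := by
  intro d
  induction d with
  | zero =>
    intro b hb hbJ
    exact ⟨b, ⟨hbJ, fun b' _ hle => eq_of_le_of_deg_le hle (by omega)⟩, le_refl b⟩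
  | succ d ih =>
    intro b hb hbJ
    by_cases hmin : ∀ b' ∈ semigroupIdeal F, b' ≤ b → b' = b
    · exact ⟨b, ⟨hbJ, hmin⟩, le_refl b⟩
    · push_neg at hmin
      obtain ⟨b', hb'J, hle, hne⟩ := hmin
      have hlt : deg b' < deg b :=
        lt_of_le_of_ne (deg_mono hle) fun h => hne (eq_of_le_of_deg_le hle h.ge)
      obtain ⟨m, hm, hmle⟩ := ih b' (by omega) hb'J
      exact ⟨m, hm, hmle.trans hle⟩

/-- If `α ∈ F` has `k ∈ [α]` with `k ∉ L` and `β = α - e_k` is a new minimal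
generator of minimal degree among `Min(J_F) \ P` (where `P ⊆ Min(J_F)` is
supported inside `L`), then every `α - e_i`, `i ∈ [α]`, is a new minimal
generator; these are pairwise distinct of degree `|α| - 1`. -/
theorem new_minimal_generators {n : ℕ} (F : Set (Fin n → ℕ))
    (P : Set (Fin n → ℕ)) (L : Set (Fin n))
    (hP : P ⊆ minSet (semigroupIdeal F))
    (hPL : ∀ γ ∈ P, Function.support γ ⊆ L)
    (α : Fin n → ℕ) (hα : α ∈ F) (k : Fin n) (hk : α k ≠ 0) (hkL : k ∉ L)
    (hβ : α - Pi.single k 1 ∈ minSet (semigroupIdeal F) \ P)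
    (hmin : ∀ β' ∈ minSet (semigroupIdeal F) \ P,
      deg (α - Pi.single k 1) ≤ deg β') :
    (∀ i : Fin n, α i ≠ 0 →
        α - Pi.single i 1 ∈ minSet (semigroupIdeal F) \ P ∧
        deg (α - Pi.single i 1) = deg α - 1) ∧
    (∀ i j : Fin n, α i ≠ 0 → α j ≠ 0 →
        α - Pi.single i 1 = α - Pi.single j 1 → i = j) := by
  have hdegβ : deg (α - Pi.single k 1) = deg α - 1 := deg_sub_single hk
  constructor
  · intro i hi
    have hdegi : deg (α - Pi.single i 1) = deg α - 1 := deg_sub_single hi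
    -- membership in J_F
    have hJ : α - Pi.single i 1 ∈ semigroupIdeal F :=
      ⟨α - Pi.single i 1, ⟨α, hα, i, hi, rfl⟩, le_refl _⟩
    -- key: any element of J_F below α - e_i has degree ≥ deg α - 1
    have hkey : ∀ β' ∈ semigroupIdeal F, β' ≤ α - Pi.single i 1 → β' = α - Pi.single i 1 := by
      intro β' hβ'J hβ'le
      obtain ⟨m, hmMin, hmle⟩ := exists_min F (deg β') β' le_rfl hβ'J
      by_cases hmP : m ∈ P
      · -- m ∈ P: support in L, so m k = 0, so m ≤ α - e_k, so m = β, contradiction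
        have hmk : m k = 0 := by
          by_contra h
          exact hkL (hPL m hmP h)
        have hmleβ : m ≤ α - Pi.single k 1 := by
          intro j
          rcases eq_or_ne j k with rfl | hne
          · simp [hmk]
          · have h1 : m j ≤ (α - Pi.single i 1 : Fin n → ℕ) j := (hmle.trans hβ'le) j
            have h2 := single_le_apply hi j
            simp only [Pi.sub_apply] at h1 ⊢
            rw [Pi.single_eq_of_ne hne]
            omega
        have := hβ.1.2 m (hmMin.1) hmleβ
        exact absurd (this ▸ hmP) hβ.2
      · -- m ∉ P : minimal degree forces equality
        have h1 : deg α - 1 ≤ deg m := hdegβ ▸ hmin m ⟨hmMin, hmP⟩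
        have h2 : deg m ≤ deg β' := deg_mono hmle
        have h3 : deg β' ≤ deg α - 1 := hdegi ▸ deg_mono hβ'le
        exact eq_of_le_of_deg_le hβ'le (by omega)
    refine ⟨⟨⟨hJ, hkey⟩, ?_⟩, hdegi⟩
    -- not in P
    rcases eq_or_ne i k with rfl | hik
    · exact hβ.2
    · intro hPmem
      apply hkL
      apply hPL _ hPmem
      have hkk : (α - Pi.single i 1 : Fin n → ℕ) k = α k := by
        simp [Pi.single_eq_of_ne hik.symm]
      simp only [Function.mem_support, hkk]
      exact hk
  · intro i j hi hj heq
    by_contra hne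
    have := congrFun heq i
    simp only [Pi.sub_apply, Pi.single_eq_same, Pi.single_eq_of_ne hne] at this
    omega
end

section
/- Let K be a field, let M and I be finite sets, and let v : I → (M → K) be a family of vectors that spans the K-vector space M → K. Then there exists an injective map τ : M → I such that (v (τ m)) m ≠ 0 for every m ∈ M. -/
/-- A family of vectors spanning `M → K` admits an injective partial transversal:
an injective choice `τ : M → I` of columns with `(v (τ m)) m ≠ 0` for all `m`. -/
theorem spanning_family_has_transversal {K : Type*} [Field K]
    {M I : Type*} [Fintype M] [Fintype I]
    (v : I → (M → K)) (hspan : Submodule.span K (Set.range v) = ⊤) :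
    ∃ τ : M → I, Function.Injective τ ∧ ∀ m : M, v (τ m) m ≠ 0 := by
  classical
  set t : M → Finset I := fun m => Finset.univ.filter (fun i => v i m ≠ 0) with ht
  have hall : ∀ s : Finset M, s.card ≤ (s.biUnion t).card := by
    intro s
    let π : (M → K) →ₗ[K] ((↥s : Type _) → K) := LinearMap.funLeft K K (fun x => (x : M))
    have hπ : Function.Surjective π := by
      intro f
      refine ⟨fun m => if h : m ∈ s then f ⟨m, h⟩ else 0, ?_⟩
      ext ⟨m, hm⟩
      simp [π, LinearMap.funLeft, hm]
    have hspan' : Submodule.span K (Set.range (π ∘ v)) = ⊤ := by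
      rw [Set.range_comp, ← Submodule.map_span, hspan, Submodule.map_top,
        LinearMap.range_eq_top.mpr hπ]
    have h0 : ∀ i, i ∉ s.biUnion t → π (v i) = 0 := by
      intro i hi
      ext ⟨m, hm⟩
      simp only [Finset.mem_biUnion, not_exists, not_and] at hi
      have hmi := hi m hm
      simp only [ht, Finset.mem_filter, Finset.mem_univ, true_and, not_not] at hmi
      simpa [π, LinearMap.funLeft] using hmi
    set F : Finset ((↥s : Type _) → K) := (s.biUnion t).image (fun i => π (v i)) with hF
    have hsub : Set.range (π ∘ v) ⊆ insert (0 : (↥s : Type _) → K) (F : Set _) := by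
      rintro _ ⟨i, rfl⟩
      by_cases hi : i ∈ s.biUnion t
      · exact Set.mem_insert_iff.mpr (Or.inr (by
          simp only [hF, Finset.coe_image, Set.mem_image, Finset.mem_coe]
          exact ⟨i, hi, rfl⟩))
      · exact Set.mem_insert_iff.mpr (Or.inl (h0 i hi))
    have hFtop : Submodule.span K (F : Set ((↥s : Type _) → K)) = ⊤ := by
      have h1 : Submodule.span K (insert (0 : (↥s : Type _) → K) (F : Set _)) = ⊤ :=
        top_unique (hspan' ▸ Submodule.span_mono hsub)
      rwa [Submodule.span_insert_zero] at h1
    have hrank : Module.finrank K ((↥s : Type _) → K) ≤ F.card := by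
      have := finrank_span_finset_le_card (R := K) F
      rwa [Set.finrank, hFtop, finrank_top] at this
    have hcard : Module.finrank K ((↥s : Type _) → K) = s.card := by
      simp [Module.finrank_pi]
    calc s.card = Module.finrank K ((↥s : Type _) → K) := hcard.symm
      _ ≤ F.card := hrank
      _ ≤ (s.biUnion t).card := Finset.card_image_le
  obtain ⟨f, hinj, hf⟩ := (Finset.all_card_le_biUnion_card_iff_exists_injective t).mp hall
  refine ⟨f, hinj, fun m => ?_⟩
  have := hf m
  simpa [ht, Finset.mem_filter] using this
end

section
/- Let f ∈ ℂ[x₁,…,xₙ] be nonconstant and suppose its Jacobian ideal J_f is a monomial ideal. Then there exists a Thom–Sebastiani polynomial f' = Σ_{α ∈ F'} x^α (with F' ⊆ ℕ^n a finite nonempty set of nonzero exponent vectors having pairwise disjoint supports, and all coefficients equal to 1) such that J_{f'} = J_f. -/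
open MvPolynomial

/-- The monomial `x^β`, for `β : Fin n → ℕ`. -/
noncomputable def mono {n : ℕ} (β : Fin n → ℕ) : MvPolynomial (Fin n) ℂ :=
  monomial (Finsupp.equivFunOnFinite.symm β) 1

/-- The Jacobian ideal `J_f = ⟨∂f/∂x₁, …, ∂f/∂xₙ⟩`. -/
noncomputable def jacobianIdeal {n : ℕ} (f : MvPolynomial (Fin n) ℂ) :
    Ideal (MvPolynomial (Fin n) ℂ) :=
  Ideal.span (Set.range fun i => pderiv i f)

namespace TSComb

variable {n : ℕ}

/-- unit vector -/
noncomputable def ee (i : Fin n) : Fin n →₀ ℕ := Finsupp.single i 1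

/-- total degree -/
def deg (γ : Fin n →₀ ℕ) : ℕ := ∑ j, γ j

lemma ee_apply (i j : Fin n) : ee i j = if i = j then 1 else 0 := by
  simp [ee, Finsupp.single_apply]

lemma ee_apply_self (i : Fin n) : ee i i = 1 := by simp [ee_apply]

lemma ee_apply_ne {i j : Fin n} (h : i ≠ j) : ee i j = 0 := by simp [ee_apply, h]

lemma ee_inj {i j : Fin n} (h : ee i = ee j) : i = j :=
  (Finsupp.single_left_inj (by norm_num)).1 h

lemma add_apply' (a b : Fin n →₀ ℕ) (x : Fin n) : (a + b) x = a x + b x := rfl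

lemma deg_add (a b : Fin n →₀ ℕ) : deg (a + b) = deg a + deg b := by
  simp [deg, Finset.sum_add_distrib]

lemma deg_ee (i : Fin n) : deg (ee i) = 1 := by
  simp [deg, ee_apply]

lemma deg_eq_zero {a : Fin n →₀ ℕ} : deg a = 0 ↔ a = 0 := by
  constructor
  · intro h
    ext j
    have := Finset.sum_eq_zero_iff.1 h j (Finset.mem_univ j)
    simpa using this
  · rintro rfl; simp [deg]

lemma le_apply {a b : Fin n →₀ ℕ} (h : a ≤ b) (x : Fin n) : a x ≤ b x :=
  Finsupp.le_def.1 h x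

lemma le_of_forall {a b : Fin n →₀ ℕ} (h : ∀ x, a x ≤ b x) : a ≤ b :=
  Finsupp.le_def.2 h

lemma deg_mono {a b : Fin n →₀ ℕ} (h : a ≤ b) : deg a ≤ deg b :=
  Finset.sum_le_sum fun i _ => le_apply h i

lemma eq_of_le_of_deg_le {a b : Fin n →₀ ℕ} (h : a ≤ b) (hd : deg b ≤ deg a) : a = b := by
  have h2 : ∀ i ∈ Finset.univ, a i = b i := by
    rw [← Finset.sum_eq_sum_iff_of_le (fun i _ => le_apply h i)]
    exact le_antisymm (deg_mono h) hd
  ext j; exact h2 j (Finset.mem_univ j)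

lemma deg_lt_of_le_of_ne {a b : Fin n →₀ ℕ} (h : a ≤ b) (hne : a ≠ b) : deg a < deg b := by
  rcases lt_or_ge (deg a) (deg b) with h1 | h1
  · exact h1
  · exact absurd (eq_of_le_of_deg_le h h1) hne

lemma ee_le_iff {i : Fin n} {a : Fin n →₀ ℕ} : ee i ≤ a ↔ 1 ≤ a i := by
  constructor
  · intro h; simpa [ee_apply] using le_apply h i
  · intro h
    apply le_of_forall
    intro x
    rcases eq_or_ne i x with rfl | hx
    · simpa [ee_apply]
    · simp [ee_apply, hx]

lemma sub_ee_add {a : Fin n →₀ ℕ} {i : Fin n} (h : 1 ≤ a i) : (a - ee i) + ee i = a :=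
  tsub_add_cancel_of_le (ee_le_iff.2 h)

lemma sub_ee_apply (a : Fin n →₀ ℕ) (i x : Fin n) : (a - ee i) x = a x - ee i x :=
  Finsupp.tsub_apply a (ee i) x

lemma eq_single_of_deg_one {γ : Fin n →₀ ℕ} (h : deg γ = 1) : ∃ i, γ = ee i := by
  have h0 : ∃ i, γ i ≠ 0 := by
    by_contra hc
    push_neg at hc
    have : γ = 0 := by ext j; exact hc j
    rw [this] at h; simp [deg] at h
  obtain ⟨i, hi⟩ := h0
  refine ⟨i, ?_⟩
  have hsum : γ i + ∑ j ∈ Finset.univ.erase i, γ j = 1 := by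
    rw [← h, deg, ← Finset.add_sum_erase _ _ (Finset.mem_univ i)]
  have hγi : γ i = 1 := by omega
  have hrest : ∑ j ∈ Finset.univ.erase i, γ j = 0 := by omega
  ext j
  rcases eq_or_ne i j with rfl | hj
  · simp [ee_apply, hγi]
  · have := Finset.sum_eq_zero_iff.1 hrest j (by simp [Finset.mem_erase, Ne.symm hj])
    simp [ee_apply, hj, this]

section Main

variable (G : Finset (Fin n →₀ ℕ)) (σ : (Fin n →₀ ℕ) → Fin n)

/-- Antichain hypothesis -/
def AC : Prop := ∀ γ ∈ G, ∀ δ ∈ G, δ ≤ γ → δ = γ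

/-- injectivity of σ on G -/
def INJ : Prop := ∀ γ ∈ G, ∀ δ ∈ G, σ γ = σ δ → γ = δ

/-- star hypothesis -/
def STAR : Prop := ∀ γ ∈ G, ∀ (β' : Fin n →₀ ℕ) (j : Fin n),
    β' + ee j = γ + ee (σ γ) → ∃ δ ∈ G, δ ≤ β'

/-- Key Lemma: exact siblings. -/
theorem KL (hAC : AC G) (hInj : INJ G σ) (hStar : STAR G σ) :
    ∀ γ ∈ G, ∀ (β' : Fin n →₀ ℕ) (j : Fin n),
      β' + ee j = γ + ee (σ γ) → β' ∈ G := by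
  suffices H : ∀ d : ℕ, ∀ γ ∈ G, deg γ < d → ∀ (β' : Fin n →₀ ℕ) (j : Fin n),
      β' + ee j = γ + ee (σ γ) → β' ∈ G by
    intro γ hγ β' j heq
    exact H (deg γ + 1) γ hγ (Nat.lt_succ_self _) β' j heq
  intro d
  induction d with
  | zero => intro γ _ h; omega
  | succ d IH =>
    intro γ hγ hdeg β' j heq
    set s := σ γ with hs
    rcases eq_or_ne j s with rfl | hjs
    · have : β' = γ := add_right_cancel heq
      rwa [this]
    -- j ≠ s
    by_contra hβ'
    obtain ⟨δ₀, hδ₀G, hδ₀le⟩ := hStar γ hγ β' j heq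
    have happ : ∀ x, β' x + ee j x = γ x + ee s x := fun x => by
      have := congrArg (fun (z : Fin n →₀ ℕ) => z x) heq
      simpa using this
    have hβ'j : β' j + 1 = γ j := by
      have := happ j
      simpa [ee_apply_self, ee_apply_ne (Ne.symm hjs)] using this
    have hβ's : β' s = γ s + 1 := by
      have := happ s
      simpa [ee_apply_self, ee_apply_ne hjs] using this
    have hβ'x : ∀ x, x ≠ j → x ≠ s → β' x = γ x := by
      intro x hxj hxs
      have := happ x
      simpa [ee_apply_ne (Ne.symm hxj), ee_apply_ne (Ne.symm hxs)] using this
    have hdegβ' : deg β' = deg γ := by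
      have := congrArg deg heq
      simp only [deg_add, deg_ee] at this
      omega
    -- fact F2 : any δ ∈ G with δ ≤ β' has δ s = γ s + 1
    have F2 : ∀ δ ∈ G, δ ≤ β' → δ s = γ s + 1 := by
      intro δ hδG hδle
      have hle : δ s ≤ γ s + 1 := by
        have := le_apply hδle s; omega
      rcases Nat.lt_or_ge (δ s) (γ s + 1) with hlt | hge
      · exfalso
        have hδγ : δ ≤ γ := by
          apply le_of_forall
          intro x
          rcases eq_or_ne x s with rfl | hxs
          · omega
          · rcases eq_or_ne x j with rfl | hxj
            · have := le_apply hδle x; omega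
            · have := le_apply hδle x
              rw [hβ'x x hxj hxs] at this; exact this
        have hδeq : δ = γ := hAC γ hγ δ hδG hδγ
        have : δ j ≤ β' j := le_apply hδle j
        rw [hδeq] at this
        omega
      · omega
    -- F3 : deg δ₀ < deg γ
    have hδ₀ne : δ₀ ≠ β' := fun h => hβ' (h ▸ hδ₀G)
    have F3 : deg δ₀ < deg γ := by
      have := deg_lt_of_le_of_ne hδ₀le hδ₀ne
      omega
    -- invariant
    set P : Fin n → Prop := fun t => ∃ ζ, ζ ∈ G ∧ ζ + ee s = δ₀ + ee t ∧
        ζ + ee j ≤ γ + ee t ∧ ζ t = γ t + 1 ∧ t ≠ j with hP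
    have hPs : P s := by
      refine ⟨δ₀, hδ₀G, rfl, ?_, F2 δ₀ hδ₀G hδ₀le, Ne.symm hjs⟩
      calc δ₀ + ee j ≤ β' + ee j := add_le_add_left hδ₀le _
        _ = γ + ee s := heq
    have hdegζ : ∀ t, ∀ ζ, ζ + ee s = δ₀ + ee t → deg ζ = deg δ₀ := by
      intro t ζ h
      have := congrArg deg h
      simp only [deg_add, deg_ee] at this
      omega
    -- the step of the chain
    have hstep : ∀ (t : Fin n) (h : P t), P (σ h.choose) ∧ σ h.choose ≠ s := by
      intro t h
      obtain ⟨hζG, h1, h2, h3, htj⟩ := h.choose_spec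
      set ζ := h.choose with hζ
      set t' := σ ζ with ht'
      have hdζ : deg ζ < deg γ := by
        have := hdegζ t ζ h1; omega
      have ht's : t' ≠ s := by
        intro hc
        have : ζ = γ := hInj ζ hζG γ hγ (by rw [← ht', hc])
        rw [this] at hdζ; omega
      refine ⟨?_, ht's⟩
      rcases eq_or_ne t' t with h'eq | h'ne
      · rw [h'eq]; exact ⟨ζ, hζG, h1, h2, h3, htj⟩
      -- t' ≠ t : build the new witness
      have hζt1 : 1 ≤ ζ t := by omega
      set ζ' := (ζ - ee t) + ee t' with hζ'
      have hζ'add : ζ' + ee t = ζ + ee t' := by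
        rw [hζ', add_right_comm, sub_ee_add hζt1]
      have hζ'G : ζ' ∈ G := by
        apply IH ζ hζG (by omega) ζ' t
        rw [hζ'add, ht']
      have hζ'app : ∀ x, ζ' x + ee t x = ζ x + ee t' x := fun x => by
        have := congrArg (fun (z : Fin n →₀ ℕ) => z x) hζ'add
        simpa using this
      have hζ't' : ζ' t' = ζ t' + 1 := by
        have := hζ'app t'
        simpa [ee_apply_self, ee_apply_ne (Ne.symm h'ne)] using this
      have hζ't : ζ' t = γ t := by
        have := hζ'app t
        simp [ee_apply_self, ee_apply_ne h'ne] at this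
        omega
      have hζ'x : ∀ x, x ≠ t → x ≠ t' → ζ' x = ζ x := by
        intro x hxt hxt'
        have := hζ'app x
        simpa [ee_apply_ne (Ne.symm hxt), ee_apply_ne (Ne.symm hxt')] using this
      have h2app : ∀ x, ζ x + ee j x ≤ γ x + ee t x := fun x => le_apply h2 x
      have h2j : ζ j + 1 ≤ γ j := by
        have := h2app j
        simpa [ee_apply_self, ee_apply_ne htj] using this
      have h2other : ∀ x, x ≠ j → x ≠ t → ζ x ≤ γ x := by
        intro x hxj hxt
        have := h2app x
        simpa [ee_apply_ne (Ne.symm hxj), ee_apply_ne (Ne.symm hxt)] using this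
      have hdζ' : deg ζ' = deg ζ := by
        have := congrArg deg hζ'add
        simp only [deg_add, deg_ee] at this
        omega
      -- t' ≠ j
      have ht'j : t' ≠ j := by
        intro hc
        have hle : ζ' ≤ γ := by
          apply le_of_forall
          intro x
          rcases eq_or_ne x t with rfl | hxt
          · omega
          rcases eq_or_ne x t' with rfl | hxt'
          · rw [hζ't', hc]; omega
          · rw [hζ'x x hxt hxt']
            exact h2other x (fun h => hxt' (h.trans hc.symm)) hxt
        have : ζ' = γ := hAC γ hγ ζ' hζ'G hle
        rw [this] at hdζ'; omega
      -- ζ t' = γ t'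
      have hζt' : ζ t' = γ t' := by
        have hle : ζ t' ≤ γ t' := by
          have := h2app t'
          simpa [ee_apply_ne (Ne.symm ht'j), ee_apply_ne (Ne.symm h'ne)] using this
        rcases Nat.lt_or_ge (ζ t') (γ t') with hlt | hge
        · exfalso
          have hle2 : ζ' ≤ γ := by
            apply le_of_forall
            intro x
            rcases eq_or_ne x t with rfl | hxt
            · omega
            rcases eq_or_ne x t' with rfl | hxt'
            · omega
            · rw [hζ'x x hxt hxt']
              rcases eq_or_ne x j with rfl | hxj
              · omega
              · exact h2other x hxj hxt
          have : ζ' = γ := hAC γ hγ ζ' hζ'G hle2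
          rw [this] at hdζ'; omega
        · omega
      -- assemble P t'
      refine ⟨ζ', hζ'G, ?_, ?_, ?_, ht'j⟩
      · -- ζ' + ee s = δ₀ + ee t'
        have h0 : ζ' + ee t + ee s = δ₀ + ee t + ee t' := by
          rw [hζ'add, add_right_comm, h1]
        have h' : ζ' + ee s + ee t = δ₀ + ee t' + ee t := by
          rw [add_right_comm, h0, add_right_comm]
        exact add_right_cancel h'
      · -- ζ' + ee j ≤ γ + ee t'
        apply le_of_forall
        intro x
        show ζ' x + ee j x ≤ γ x + ee t' x
        have e1 : ζ' x + ee t x = ζ x + ee t' x := hζ'app x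
        have e2 : ζ x + ee j x ≤ γ x + ee t x := h2app x
        rcases eq_or_ne x t' with rfl | hxt'
        · have v1 : ee j t' = 0 := ee_apply_ne (Ne.symm ht'j)
          have v2 : ee t t' = 0 := ee_apply_ne (Ne.symm h'ne)
          have v3 : ee t' t' = 1 := ee_apply_self t'
          omega
        · have v3 : ee t' x = 0 := ee_apply_ne (fun h => hxt' h.symm)
          rcases eq_or_ne x t with rfl | hxt
          · have v1 : ee j x = 0 := ee_apply_ne (Ne.symm htj)
            have v2 : ee x x = 1 := ee_apply_self x
            omega
          · have v2 : ee t x = 0 := ee_apply_ne (fun h => hxt h.symm)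
            rcases eq_or_ne x j with rfl | hxj
            · have v1 : ee x x = 1 := ee_apply_self x
              omega
            · have v1 : ee j x = 0 := ee_apply_ne (Ne.symm hxj)
              omega
      · -- ζ' t' = γ t' + 1
        show ζ' t' = γ t' + 1
        rw [hζ't', hζt']
    -- build the infinite chain
    classical
    let next : {t : Fin n // P t} → {t : Fin n // P t} :=
      fun q => ⟨σ q.2.choose, (hstep q.1 q.2).1⟩
    let T : ℕ → {t : Fin n // P t} := fun k => next^[k] ⟨s, hPs⟩
    have hT0 : (T 0).1 = s := rfl
    have hTsucc : ∀ k, T (k + 1) = next (T k) := fun k =>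
      Function.iterate_succ_apply' next k _
    have hTne : ∀ k, (T (k + 1)).1 ≠ s := by
      intro k
      rw [hTsucc k]
      exact (hstep (T k).1 (T k).2).2
    have hwitness : ∀ (q : {t : Fin n // P t}), q.2.choose + ee s = δ₀ + ee q.1 :=
      fun q => q.2.choose_spec.2.1
    have hwitG : ∀ (q : {t : Fin n // P t}), q.2.choose ∈ G :=
      fun q => q.2.choose_spec.1
    have hnextinj : ∀ q q' : {t : Fin n // P t}, (next q).1 = (next q').1 → q.1 = q'.1 := by
      intro q q' h
      have hζeq : q.2.choose = q'.2.choose := hInj _ (hwitG q) _ (hwitG q') h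
      have := (hwitness q).symm.trans (hζeq ▸ hwitness q')
      have h2 := add_left_cancel this
      exact ee_inj h2
    have hTinj : ∀ a b, (T a).1 = (T b).1 → a = b := by
      intro a
      induction a with
      | zero =>
        intro b hb
        cases b with
        | zero => rfl
        | succ b => exact absurd (hb.symm.trans hT0) (hTne b)
      | succ a IHa =>
        intro b hb
        cases b with
        | zero => exact absurd (hb.trans hT0) (hTne a)
        | succ b =>
          rw [hTsucc a, hTsucc b] at hb
          exact congrArg Nat.succ (IHa b (hnextinj _ _ hb))
    have : Function.Injective (fun k => (T k).1) := fun a b h => hTinj a b h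
    obtain ⟨a, b, hab, h⟩ := Finite.exists_ne_map_eq_of_infinite (fun k => (T k).1)
    exact hab (hTinj a b h)

/-- Star lemma : any element of `G` whose support contains `σ γ₀` is a member
of the block of `γ₀`. -/
theorem star (hAC : AC G) (hInj : INJ G σ) (hStar : STAR G σ) :
    ∀ γ₀ ∈ G, ∀ ζ ∈ G, 1 ≤ ζ (σ γ₀) → ∃ x, ζ + ee x = γ₀ + ee (σ γ₀) := by
  classical
  intro γ₀ hγ₀ ζ hζ hζs
  set s := σ γ₀ with hs
  set ρ := ζ - ee s with hρdef
  have hρs : ρ + ee s = ζ := sub_ee_add hζs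
  set I : Finset (Fin n) := Finset.univ.filter (fun z => ρ + ee z ∈ G) with hI
  have hsI : s ∈ I := by
    simp only [hI, Finset.mem_filter, Finset.mem_univ, true_and]
    rw [hρs]; exact hζ
  have hπmem : ∀ z ∈ I, σ (ρ + ee z) ∈ I := by
    intro z hz
    simp only [hI, Finset.mem_filter, Finset.mem_univ, true_and] at hz ⊢
    exact KL G σ hAC hInj hStar (ρ + ee z) hz (ρ + ee (σ (ρ + ee z))) z
      (by rw [add_right_comm])
  have hπinj : ∀ z ∈ I, ∀ z' ∈ I, σ (ρ + ee z) = σ (ρ + ee z') → z = z' := by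
    intro z hz z' hz' h
    simp only [hI, Finset.mem_filter, Finset.mem_univ, true_and] at hz hz'
    have h2 := hInj _ hz _ hz' h
    exact ee_inj (add_left_cancel h2)
  have himg : I.image (fun z => σ (ρ + ee z)) = I := by
    apply Finset.eq_of_subset_of_card_le
    · intro y hy
      obtain ⟨z, hz, rfl⟩ := Finset.mem_image.1 hy
      exact hπmem z hz
    · rw [Finset.card_image_of_injOn hπinj]
  have hsimg : s ∈ I.image (fun z => σ (ρ + ee z)) := by rw [himg]; exact hsI
  obtain ⟨x, hxI, hx⟩ := Finset.mem_image.1 hsimg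
  simp only [hI, Finset.mem_filter, Finset.mem_univ, true_and] at hxI
  have hxγ : ρ + ee x = γ₀ := hInj _ hxI _ hγ₀ hx
  refine ⟨x, ?_⟩
  rw [← hxγ, ← hρs, add_right_comm]

/-- U lemma : members of blocks of elements of degree ≥ 2 point back at their
block. -/
theorem Ulem (hAC : AC G) (hInj : INJ G σ) (hStar : STAR G σ) :
    ∀ γ ∈ G, 2 ≤ deg γ → ∀ (η : Fin n →₀ ℕ) (m : Fin n),
      η + ee m = γ + ee (σ γ) → η ∈ G → σ η = m := by
  intro γ hγ hdeg η m heq hη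
  set s := σ γ with hs
  rcases eq_or_ne m s with rfl | hms
  · have : η = γ := add_right_cancel heq
    rw [this]
  by_contra hum'
  set u := σ η with hu
  have hum : u ≠ m := hum'
  have hηγ : η ≠ γ := by
    intro hc
    rw [hc] at heq
    exact hms (ee_inj (add_left_cancel heq))
  have hus : u ≠ s := by
    intro hc
    exact hηγ (hInj _ hη _ hγ hc)
  have happ : ∀ x, η x + ee m x = γ x + ee s x := fun x => by
    have := congrArg (fun (z : Fin n →₀ ℕ) => z x) heq
    simpa using this
  have hγm : η m + 1 = γ m := by
    have := happ m
    simpa [ee_apply_self, ee_apply_ne (Ne.symm hms)] using this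
  have hγm1 : 1 ≤ γ m := by omega
  set ρ := γ - ee m with hρdef
  have hργ : ρ + ee m = γ := sub_ee_add hγm1
  have hηρ : η = ρ + ee s := by
    have h1 : η + ee m = (ρ + ee s) + ee m := by
      rw [add_right_comm, hργ]; exact heq
    exact add_right_cancel h1
  have hρx : ∀ x, ρ x ≤ γ x := by
    intro x
    rw [hρdef, sub_ee_apply]; omega
  by_cases hgu : 1 ≤ γ u
  · -- case B1
    obtain ⟨y, hy⟩ := star G σ hAC hInj hStar η hη γ hγ (by rw [← hu]; exact hgu)
    have := congrArg (fun (z : Fin n →₀ ℕ) => z m) hy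
    simp only [add_apply'] at this
    rw [ee_apply_ne hum] at this
    have h1 : 0 ≤ ee y m := Nat.zero_le _
    omega
  · -- case B2
    push_neg at hgu
    have hγu : γ u = 0 := by omega
    have hρne : ρ ≠ 0 := by
      intro hc
      have h := congrArg deg hργ
      rw [hc, zero_add, deg_ee] at h
      omega
    have hρl : ∃ l, 1 ≤ ρ l := by
      by_contra hc
      push_neg at hc
      exact hρne (by
        ext x
        have := hc x
        simp only [Finsupp.coe_zero, Pi.zero_apply]
        omega)
    obtain ⟨l, hl⟩ := hρl
    have hlu : l ≠ u := by
      intro hc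
      have h1 := hρx u
      have h2 : ρ l = ρ u := by rw [hc]
      omega
    have hηul : 1 ≤ (η + ee u) l := by
      have : ρ l ≤ η l := by
        rw [hηρ, add_apply']; omega
      rw [add_apply']; omega
    set χ := (η + ee u) - ee l with hχdef
    have hχl : χ + ee l = η + ee u := sub_ee_add hηul
    have hχG : χ ∈ G := KL G σ hAC hInj hStar η hη χ l (by rw [hχl, hu])
    have hχs : 1 ≤ χ s := by
      have h1 := congrArg (fun (z : Fin n →₀ ℕ) => z s) hχl
      simp only [add_apply'] at h1
      have h2 : η s = ρ s + 1 := by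
        rw [hηρ, add_apply', ee_apply_self]
      rw [ee_apply_ne hus] at h1
      rcases eq_or_ne l s with rfl | hls
      · rw [ee_apply_self] at h1
        omega
      · rw [ee_apply_ne hls] at h1
        omega
    obtain ⟨x, hx⟩ := star G σ hAC hInj hStar γ hγ χ hχG hχs
    rw [← hs] at hx
    -- hx : χ + ee x = γ + ee s ; hχl : χ + ee l = η + ee u
    have hA : χ + (ee x + ee l) = (ρ + ee s) + (ee m + ee l) := by
      calc χ + (ee x + ee l) = (χ + ee x) + ee l := by rw [add_assoc]
        _ = (γ + ee s) + ee l := by rw [hx]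
        _ = ((ρ + ee m) + ee s) + ee l := by rw [← hργ]
        _ = (ρ + ee s) + (ee m + ee l) := by abel
    have hB : χ + (ee l + ee x) = (ρ + ee s) + (ee u + ee x) := by
      calc χ + (ee l + ee x) = (χ + ee l) + ee x := by rw [add_assoc]
        _ = (η + ee u) + ee x := by rw [hχl]
        _ = ((ρ + ee s) + ee u) + ee x := by rw [← hηρ]
        _ = (ρ + ee s) + (ee u + ee x) := by abel
    have hAB : (ρ + ee s) + (ee m + ee l) = (ρ + ee s) + (ee u + ee x) := by
      rw [← hA, ← hB, add_comm (ee x) (ee l)]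
    have hfin : ee m + ee l = ee u + ee x := add_left_cancel hAB
    have := congrArg (fun (z : Fin n →₀ ℕ) => z u) hfin
    simp only [add_apply'] at this
    rw [ee_apply_ne (Ne.symm hum), ee_apply_ne hlu, ee_apply_self] at this
    omega

/-- The main combinatorial theorem: a Thom–Sebastiani decomposition of `G`. -/
theorem decomposition (hAC : AC G) (hInj : INJ G σ) (hStar : STAR G σ)
    (hGne : G.Nonempty) :
    ∃ A : Finset (Fin n →₀ ℕ), A.Nonempty ∧ (∀ α ∈ A, α ≠ 0) ∧
      (∀ α ∈ A, ∀ α' ∈ A, α ≠ α' → Disjoint α.support α'.support) ∧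
      (∀ δ : Fin n →₀ ℕ, δ ∈ G ↔ ∃ α ∈ A, ∃ i, δ + ee i = α) := by
  classical
  by_cases h0 : (0 : Fin n →₀ ℕ) ∈ G
  · -- G = {0}
    have hG0 : ∀ γ ∈ G, γ = 0 := fun γ hγ => (hAC γ hγ 0 h0 zero_le).symm
    refine ⟨{ee (σ 0)}, ⟨_, Finset.mem_singleton_self _⟩, ?_, ?_, ?_⟩
    · intro α hα
      rw [Finset.mem_singleton] at hα
      subst hα
      intro hc
      have := congrArg deg hc
      rw [deg_ee] at this
      simp [deg] at this
    · intro α hα α' hα' hne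
      rw [Finset.mem_singleton] at hα hα'
      exact absurd (hα.trans hα'.symm) hne
    · intro δ
      constructor
      · intro hδ
        have := hG0 δ hδ
        subst this
        exact ⟨ee (σ 0), Finset.mem_singleton_self _, σ 0, by rw [zero_add]⟩
      · rintro ⟨α, hα, i, hi⟩
        rw [Finset.mem_singleton] at hα
        subst hα
        have hd := congrArg deg hi
        rw [deg_add, deg_ee, deg_ee] at hd
        have : deg δ = 0 := by omega
        rw [deg_eq_zero] at this
        rw [this]; exact h0
  · -- all elements have degree ≥ 1
    have hdeg1 : ∀ γ ∈ G, 1 ≤ deg γ := by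
      intro γ hγ
      by_contra hc
      have : deg γ = 0 := by omega
      rw [deg_eq_zero] at this
      exact h0 (this ▸ hγ)
    set A₂ : Finset (Fin n →₀ ℕ) :=
      (G.filter (fun γ => deg γ ≠ 1)).image (fun γ => γ + ee (σ γ)) with hA₂
    set A₁ : Finset (Fin n →₀ ℕ) :=
      (G.filter (fun γ => deg γ = 1)).image (fun γ => γ + γ) with hA₁
    -- helper : members of A₂ blocks
    have hmem2 : ∀ α ∈ A₂, ∃ γ ∈ G, 2 ≤ deg γ ∧ α = γ + ee (σ γ) := by
      intro α hα
      rw [hA₂, Finset.mem_image] at hα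
      obtain ⟨γ, hγ, rfl⟩ := hα
      rw [Finset.mem_filter] at hγ
      have := hdeg1 γ hγ.1
      exact ⟨γ, hγ.1, by omega, rfl⟩
    have hmem1 : ∀ α ∈ A₁, ∃ i, ee i ∈ G ∧ α = ee i + ee i := by
      intro α hα
      rw [hA₁, Finset.mem_image] at hα
      obtain ⟨γ, hγ, rfl⟩ := hα
      rw [Finset.mem_filter] at hγ
      obtain ⟨i, rfl⟩ := eq_single_of_deg_one hγ.2
      exact ⟨i, hγ.1, rfl⟩
    -- key fact : a shared support variable of an A₂ block yields its member
    have hblockmem : ∀ γ ∈ G, 2 ≤ deg γ → ∀ v, 1 ≤ (γ + ee (σ γ)) v →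
        ∃ μ ∈ G, μ + ee v = γ + ee (σ γ) ∧ σ μ = v := by
      intro γ hγ h2 v hv
      set α := γ + ee (σ γ) with hα
      set μ := α - ee v with hμ
      have hμv : μ + ee v = α := sub_ee_add hv
      have hμG : μ ∈ G := KL G σ hAC hInj hStar γ hγ μ v hμv
      exact ⟨μ, hμG, hμv, Ulem G σ hAC hInj hStar γ hγ h2 μ v hμv hμG⟩
    -- disjointness of an A₂ block from a singleton block
    have hdisj21 : ∀ γ ∈ G, 2 ≤ deg γ → ∀ i, ee i ∈ G →
        ∀ v, 1 ≤ (γ + ee (σ γ)) v → 1 ≤ (ee i + ee i) v → False := by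
      intro γ hγ h2 i hi v hv hv'
      have hvi : v = i := by
        by_contra hc
        rw [add_apply', ee_apply_ne (fun h => hc h.symm)] at hv'
        omega
      subst hvi
      set α := γ + ee (σ γ) with hα
      have hdα : deg α = deg γ + 1 := by rw [hα, deg_add, deg_ee]
      -- find a member μ of the block of γ with 1 ≤ μ v and 2 ≤ deg μ
      have : ∃ μ ∈ G, 1 ≤ μ v ∧ 2 ≤ deg μ := by
        by_cases hall : ∀ x, x ≠ v → α x = 0
        · -- α is supported on v only, with α v = deg α ≥ 3
          have hαv : α v = deg α := by
            rw [deg]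
            rw [Finset.sum_eq_single v]
            · intro x _ hx
              exact hall x hx
            · intro hx
              exact absurd (Finset.mem_univ v) hx
          set μ := α - ee v with hμ
          have hμv : μ + ee v = α := sub_ee_add hv
          have hμG : μ ∈ G := KL G σ hAC hInj hStar γ hγ μ v hμv
          have hμdeg : deg μ + 1 = deg α := by
            have := congrArg deg hμv
            rw [deg_add, deg_ee] at this
            omega
          have hμvv : μ v + 1 = α v := by
            have := congrArg (fun (z : Fin n →₀ ℕ) => z v) hμv
            simp only [add_apply', ee_apply_self] at this
            omega
          exact ⟨μ, hμG, by omega, by omega⟩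
        · push_neg at hall
          obtain ⟨x, hxv, hx⟩ := hall
          have hx1 : 1 ≤ α x := by omega
          set μ := α - ee x with hμ
          have hμx : μ + ee x = α := sub_ee_add hx1
          have hμG : μ ∈ G := KL G σ hAC hInj hStar γ hγ μ x hμx
          have hμdeg : deg μ + 1 = deg α := by
            have := congrArg deg hμx
            rw [deg_add, deg_ee] at this
            omega
          have hμv : μ v = α v := by
            have := congrArg (fun (z : Fin n →₀ ℕ) => z v) hμx
            simp only [add_apply'] at this
            rw [ee_apply_ne hxv] at this
            omega
          exact ⟨μ, hμG, by omega, by omega⟩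
      obtain ⟨μ, hμG, hμv, hμdeg⟩ := this
      have hle : ee v ≤ μ := ee_le_iff.2 hμv
      have heqq : ee v = μ := hAC μ hμG (ee v) hi hle
      rw [← heqq] at hμdeg
      rw [deg_ee] at hμdeg
      omega
    refine ⟨A₂ ∪ A₁, ?_, ?_, ?_, ?_⟩
    · -- nonempty
      obtain ⟨γ, hγ⟩ := hGne
      by_cases hd : deg γ = 1
      · exact ⟨γ + γ, Finset.mem_union_right _ (Finset.mem_image_of_mem _
          (Finset.mem_filter.2 ⟨hγ, hd⟩))⟩
      · exact ⟨γ + ee (σ γ), Finset.mem_union_left _ (Finset.mem_image_of_mem _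
          (Finset.mem_filter.2 ⟨hγ, hd⟩))⟩
    · -- nonzero
      intro α hα
      rcases Finset.mem_union.1 hα with h | h
      · obtain ⟨γ, _, _, rfl⟩ := hmem2 α h
        intro hc
        have h' := congrArg deg hc
        simp only [deg_add, deg_ee] at h'
        rw [show deg (0 : Fin n →₀ ℕ) = 0 from deg_eq_zero.2 rfl] at h'
        omega
      · obtain ⟨i, _, rfl⟩ := hmem1 α h
        intro hc
        have h' := congrArg deg hc
        simp only [deg_add, deg_ee] at h'
        rw [show deg (0 : Fin n →₀ ℕ) = 0 from deg_eq_zero.2 rfl] at h'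
        omega
    · -- pairwise disjoint supports
      intro α hα α' hα' hne
      rw [Finset.disjoint_left]
      intro v hv hv'
      rw [Finsupp.mem_support_iff] at hv hv'
      have hv1 : 1 ≤ α v := by omega
      have hv'1 : 1 ≤ α' v := by omega
      rcases Finset.mem_union.1 hα with h | h <;> rcases Finset.mem_union.1 hα' with h' | h'
      · obtain ⟨γ, hγ, h2, rfl⟩ := hmem2 α h
        obtain ⟨γ', hγ', h2', rfl⟩ := hmem2 α' h'
        obtain ⟨μ, hμG, hμeq, hμσ⟩ := hblockmem γ hγ h2 v hv1
        obtain ⟨μ', hμ'G, hμ'eq, hμ'σ⟩ := hblockmem γ' hγ' h2' v hv'1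
        have : μ = μ' := hInj μ hμG μ' hμ'G (hμσ.trans hμ'σ.symm)
        apply hne
        rw [← hμeq, ← hμ'eq, this]
      · obtain ⟨γ, hγ, h2, rfl⟩ := hmem2 α h
        obtain ⟨i, hi, rfl⟩ := hmem1 α' h'
        exact hdisj21 γ hγ h2 i hi v hv1 hv'1
      · obtain ⟨γ, hγ, h2, rfl⟩ := hmem2 α' h'
        obtain ⟨i, hi, rfl⟩ := hmem1 α h
        exact hdisj21 γ hγ h2 i hi v hv'1 hv1
      · obtain ⟨i, hi, rfl⟩ := hmem1 α h
        obtain ⟨i', hi', rfl⟩ := hmem1 α' h'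
        have hvi : v = i := by
          by_contra hc
          rw [add_apply', ee_apply_ne (fun hh => hc hh.symm)] at hv1
          omega
        have hvi' : v = i' := by
          by_contra hc
          rw [add_apply', ee_apply_ne (fun hh => hc hh.symm)] at hv'1
          omega
        apply hne
        rw [← hvi, ← hvi']
    · -- membership characterization
      intro δ
      constructor
      · intro hδ
        by_cases hd : deg δ = 1
        · obtain ⟨i, rfl⟩ := eq_single_of_deg_one hd
          refine ⟨ee i + ee i, Finset.mem_union_right _ (Finset.mem_image_of_mem _
            (Finset.mem_filter.2 ⟨hδ, hd⟩)), i, rfl⟩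
        · exact ⟨δ + ee (σ δ), Finset.mem_union_left _ (Finset.mem_image_of_mem _
            (Finset.mem_filter.2 ⟨hδ, hd⟩)), σ δ, rfl⟩
      · rintro ⟨α, hα, i, hi⟩
        rcases Finset.mem_union.1 hα with h | h
        · obtain ⟨γ, hγ, _, rfl⟩ := hmem2 α h
          exact KL G σ hAC hInj hStar γ hγ δ i hi
        · obtain ⟨i₀, hi₀, rfl⟩ := hmem1 α h
          have hii₀ : i = i₀ := by
            by_contra hc
            have := congrArg (fun (z : Fin n →₀ ℕ) => z i) hi
            simp only [add_apply', ee_apply_self] at this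
            rw [ee_apply_ne (fun hh => hc hh.symm)] at this
            omega
          subst hii₀
          have : δ = ee i := add_right_cancel hi
          rw [this]
          exact hi₀

end Main

section Algebra

open MvPolynomial

variable {n : ℕ}

local notation "R" => MvPolynomial (Fin n) ℂ

/-- If an ideal is spanned by monomials, it contains each monomial component of
each of its members. -/
lemma component_mem {S : Set R} (hS : ∀ q ∈ S, ∃ (d : Fin n →₀ ℕ) (c : ℂ), q = monomial d c)
    {p : R} (hp : p ∈ Ideal.span S) : ∀ d : Fin n →₀ ℕ,
    monomial d (coeff d p) ∈ Ideal.span S := by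
  classical
  induction hp using Submodule.span_induction with
  | mem x hx =>
    intro d
    obtain ⟨b, c, rfl⟩ := hS x hx
    rw [coeff_monomial]
    by_cases h : b = d
    · rw [if_pos h, ← h]
      exact Ideal.subset_span hx
    · rw [if_neg h, map_zero]
      exact Ideal.zero_mem _
  | zero => intro d; simp only [coeff_zero, map_zero]; exact Ideal.zero_mem _
  | add x y hx hy ihx ihy =>
    intro d
    rw [coeff_add, map_add]
    exact Ideal.add_mem _ (ihx d) (ihy d)
  | smul a x hx ih =>
    intro d
    rw [smul_eq_mul, coeff_mul, map_sum]
    apply Ideal.sum_mem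
    rintro ⟨u, v⟩ huv
    rw [Finset.HasAntidiagonal.mem_antidiagonal] at huv
    have hmm : (monomial d) (coeff u a * coeff v x)
        = (monomial u) (coeff u a) * (monomial v) (coeff v x) := by
      rw [monomial_mul, huv]
    rw [hmm]
    exact Ideal.mul_mem_left _ _ (ih v)

/-- coefficient of a partial derivative. -/
lemma coeff_pderiv (i : Fin n) (f : R) (d : Fin n →₀ ℕ) :
    coeff d (pderiv i f) = ((d i : ℂ) + 1) * coeff (d + ee i) f := by
  classical
  induction f using MvPolynomial.induction_on' with
  | monomial u a =>
    rw [pderiv_monomial, coeff_monomial, coeff_monomial]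
    by_cases hu : u i = 0
    · have husub : u - Finsupp.single i 1 = u := by
        ext x
        rw [Finsupp.tsub_apply]
        rcases eq_or_ne x i with rfl | hx
        · simp [hu]
        · simp [Finsupp.single_apply, Ne.symm hx]
      rw [husub]
      have hne : u ≠ d + ee i := by
        intro hc
        have := congrArg (fun (z : Fin n →₀ ℕ) => z i) hc
        simp only [add_apply', ee_apply_self] at this
        omega
      rw [if_neg hne, mul_zero, hu]
      by_cases h2 : u = d <;> simp [h2]
    · have hiff : u - Finsupp.single i 1 = d ↔ u = d + ee i := by
        constructor
        · intro h
          have : (u - Finsupp.single i 1) + ee i = u := sub_ee_add (by omega)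
          rw [h] at this
          exact this.symm
        · intro h
          rw [h]
          show d + ee i - ee i = d
          exact add_tsub_cancel_right d (ee i)
      by_cases h : u = d + ee i
      · rw [if_pos (hiff.2 h), if_pos h]
        have : u i = d i + 1 := by
          have := congrArg (fun (z : Fin n →₀ ℕ) => z i) h
          simp only [add_apply', ee_apply_self] at this
          omega
        rw [this]
        push_cast
        ring
      · rw [if_neg (fun hc => h (hiff.1 hc)), if_neg h, mul_zero]
  | add p q hp hq =>
    rw [map_add, coeff_add, coeff_add, hp, hq]
    ring

lemma support_pderiv_mem {i : Fin n} {f : R} {d : Fin n →₀ ℕ}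
    (h : d ∈ (pderiv i f).support) : d + ee i ∈ f.support := by
  rw [MvPolynomial.mem_support_iff] at h ⊢
  intro hc
  rw [coeff_pderiv, hc, mul_zero] at h
  exact h rfl

lemma coeff_pderiv_ne_zero {i : Fin n} {f : R} {d : Fin n →₀ ℕ}
    (h : d + ee i ∈ f.support) : coeff d (pderiv i f) ≠ 0 := by
  rw [MvPolynomial.mem_support_iff] at h
  rw [coeff_pderiv]
  exact mul_ne_zero (Nat.cast_add_one_ne_zero (d i)) h

end Algebra

section Derive

open MvPolynomial

variable {n : ℕ}

/-- From a nonconstant polynomial with monomial Jacobian ideal, extract the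
combinatorial data. -/
theorem exists_G_sigma (f : MvPolynomial (Fin n) ℂ) (hf : ∀ c : ℂ, f ≠ C c)
    (hmono : ∃ B : Set (Fin n → ℕ), jacobianIdeal f = Ideal.span (mono '' B)) :
    ∃ (G : Finset (Fin n →₀ ℕ)) (σ : (Fin n →₀ ℕ) → Fin n),
      AC G ∧ INJ G σ ∧ STAR G σ ∧ G.Nonempty ∧
      jacobianIdeal f =
        Ideal.span ((fun d => (monomial d 1 : MvPolynomial (Fin n) ℂ)) '' ↑G) := by
  classical
  obtain ⟨B, hB⟩ := hmono
  have hSmono : ∀ q ∈ mono '' B, ∃ (d : Fin n →₀ ℕ) (c : ℂ), q = monomial d c := by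
    rintro q ⟨β, -, rfl⟩
    exact ⟨_, 1, rfl⟩
  have hcomp : ∀ p ∈ jacobianIdeal f, ∀ d, monomial d (coeff d p) ∈ jacobianIdeal f := by
    intro p hp d
    rw [hB] at hp ⊢
    exact component_mem hSmono hp d
  -- the set E
  set E : Finset (Fin n →₀ ℕ) :=
    f.support.biUnion (fun β => β.support.image (fun i => β - ee i)) with hE
  have hEc : ∀ γ, γ ∈ E ↔ ∃ β ∈ f.support, ∃ i, γ + ee i = β := by
    intro γ
    constructor
    · intro h
      rw [hE, Finset.mem_biUnion] at h
      obtain ⟨β, hβ, h2⟩ := h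
      rw [Finset.mem_image] at h2
      obtain ⟨i, hi, rfl⟩ := h2
      rw [Finsupp.mem_support_iff] at hi
      exact ⟨β, hβ, i, sub_ee_add (by omega)⟩
    · rintro ⟨β, hβ, i, hγ⟩
      rw [hE, Finset.mem_biUnion]
      refine ⟨β, hβ, Finset.mem_image.2 ⟨i, ?_, ?_⟩⟩
      · rw [Finsupp.mem_support_iff]
        have := congrArg (fun (z : Fin n →₀ ℕ) => z i) hγ
        simp only [add_apply', ee_apply_self] at this
        omega
      · rw [← hγ, add_tsub_cancel_right]
  have hEsub : ∀ γ ∈ E, (monomial γ 1 : MvPolynomial (Fin n) ℂ) ∈ jacobianIdeal f := by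
    intro γ hγ
    obtain ⟨β, hβ, i, hγi⟩ := (hEc γ).1 hγ
    have hco : coeff γ (pderiv i f) ≠ 0 := coeff_pderiv_ne_zero (by rw [hγi]; exact hβ)
    have hder : pderiv i f ∈ jacobianIdeal f := Ideal.subset_span ⟨i, rfl⟩
    have h1 := hcomp _ hder γ
    have h2 : (monomial γ 1 : MvPolynomial (Fin n) ℂ)
        = C (coeff γ (pderiv i f))⁻¹ * monomial γ (coeff γ (pderiv i f)) := by
      rw [C_mul_monomial, inv_mul_cancel₀ hco]
    rw [h2]
    exact Ideal.mul_mem_left _ _ h1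
  have hJE : jacobianIdeal f =
      Ideal.span ((fun d => (monomial d 1 : MvPolynomial (Fin n) ℂ)) '' ↑E) := by
    apply le_antisymm
    · rw [jacobianIdeal]
      apply Ideal.span_le.2
      rintro q ⟨i, rfl⟩
      show (pderiv i f : MvPolynomial (Fin n) ℂ) ∈ _
      rw [← support_sum_monomial_coeff (pderiv i f)]
      apply Ideal.sum_mem
      intro d hd
      have hdE : d ∈ E := (hEc d).2 ⟨d + ee i, support_pderiv_mem hd, i, rfl⟩
      have : (monomial d (coeff d (pderiv i f)) : MvPolynomial (Fin n) ℂ)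
          = C (coeff d (pderiv i f)) * monomial d 1 := by
        rw [C_mul_monomial, mul_one]
      rw [this]
      exact Ideal.mul_mem_left _ _ (Ideal.subset_span ⟨d, hdE, rfl⟩)
    · apply Ideal.span_le.2
      rintro q ⟨γ, hγ, rfl⟩
      exact hEsub γ hγ
  -- the set of minimal elements G
  set G : Finset (Fin n →₀ ℕ) := E.filter (fun γ => ∀ δ ∈ E, δ ≤ γ → δ = γ) with hG
  have hGE : G ⊆ E := Finset.filter_subset _ _
  have hAC : AC G := by
    intro γ hγ δ hδ hle
    rw [hG, Finset.mem_filter] at hγ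
    exact hγ.2 δ (hGE hδ) hle
  have hGmin : ∀ ε ∈ E, ∃ γ ∈ G, γ ≤ ε := by
    suffices H : ∀ k, ∀ ε ∈ E, deg ε ≤ k → ∃ γ ∈ G, γ ≤ ε by
      intro ε hε
      exact H (deg ε) ε hε le_rfl
    intro k
    induction k with
    | zero =>
      intro ε hε hd
      refine ⟨ε, Finset.mem_filter.2 ⟨hε, ?_⟩, le_refl ε⟩
      intro δ _ hle
      have h1 := deg_mono hle
      have h0 : deg δ = 0 := by omega
      have h0' : deg ε = 0 := by omega
      rw [deg_eq_zero] at h0 h0'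
      rw [h0, h0']
    | succ k IH =>
      intro ε hε hd
      by_cases hm : ∀ δ ∈ E, δ ≤ ε → δ = ε
      · exact ⟨ε, Finset.mem_filter.2 ⟨hε, hm⟩, le_refl ε⟩
      · push_neg at hm
        obtain ⟨δ, hδE, hle, hne⟩ := hm
        have := deg_lt_of_le_of_ne hle hne
        have h2 := deg_mono hle
        obtain ⟨γ, hγG, hγle⟩ := IH δ hδE (by omega)
        exact ⟨γ, hγG, le_trans hγle hle⟩
  have hJG : jacobianIdeal f =
      Ideal.span ((fun d => (monomial d 1 : MvPolynomial (Fin n) ℂ)) '' ↑G) := by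
    rw [hJE]
    apply le_antisymm
    · apply Ideal.span_le.2
      rintro q ⟨ε, hε, rfl⟩
      obtain ⟨γ, hγG, hγle⟩ := hGmin ε hε
      have habove : (monomial ε 1 : MvPolynomial (Fin n) ℂ)
          = monomial (ε - γ) 1 * monomial γ 1 := by
        rw [monomial_mul, mul_one, tsub_add_cancel_of_le hγle]
      show (monomial ε 1 : MvPolynomial (Fin n) ℂ) ∈ _
      rw [habove]
      exact Ideal.mul_mem_left _ _ (Ideal.subset_span ⟨γ, hγG, rfl⟩)
    · apply Ideal.span_le.2
      rintro q ⟨γ, hγ, rfl⟩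
      exact Ideal.subset_span ⟨γ, hGE hγ, rfl⟩
  -- G is nonempty
  have hGne : G.Nonempty := by
    have hfne : ∃ β ∈ f.support, β ≠ 0 := by
      by_contra hc
      push_neg at hc
      apply hf (coeff 0 f)
      apply MvPolynomial.ext
      intro d
      rw [coeff_C]
      by_cases hd : 0 = d
      · rw [if_pos hd, ← hd]
      · rw [if_neg hd]
        by_contra hcc
        exact hd ((hc d (MvPolynomial.mem_support_iff.2 hcc)).symm)
    obtain ⟨β, hβ, hβne⟩ := hfne
    obtain ⟨i, hi⟩ := Finsupp.support_nonempty_iff.2 hβne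
    rw [Finsupp.mem_support_iff] at hi
    have hεE : β - ee i ∈ E := (hEc _).2 ⟨β, hβ, i, sub_ee_add (by omega)⟩
    obtain ⟨γ, hγG, -⟩ := hGmin _ hεE
    exact ⟨γ, hγG⟩
  -- Hall's condition and the matching
  set T : (Fin n →₀ ℕ) → Finset (Fin n) :=
    fun γ => Finset.univ.filter (fun i => γ + ee i ∈ f.support) with hT
  have hall : ∀ S : Finset (Fin n →₀ ℕ), S ⊆ G → S.card ≤ (S.biUnion T).card := by
    intro S hSG
    set N := S.biUnion T with hN
    set rows : Fin n → (↥S → ℂ) := fun i γ => coeff γ.1 (pderiv i f) with hrows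
    have hrows0 : ∀ i, i ∉ N → rows i = 0 := by
      intro i hiN
      funext γ
      have hns : γ.1 + ee i ∉ f.support := by
        intro hc
        exact hiN (Finset.mem_biUnion.2 ⟨γ.1, γ.2,
          Finset.mem_filter.2 ⟨Finset.mem_univ i, hc⟩⟩)
      show coeff γ.1 (pderiv i f) = 0
      rw [MvPolynomial.notMem_support_iff] at hns
      rw [coeff_pderiv, hns, mul_zero]
    have hsingle : ∀ γ₀ : ↥S, Pi.single γ₀ (1:ℂ) ∈
        Submodule.span ℂ (Set.range (fun i : ↥N => rows i.1)) := by
      intro γ₀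
      have hmem : (monomial γ₀.1 1 : MvPolynomial (Fin n) ℂ) ∈
          Submodule.span (MvPolynomial (Fin n) ℂ) (Set.range fun i => pderiv i f) :=
        hEsub γ₀.1 (hGE (hSG γ₀.2))
      obtain ⟨h, hh⟩ := (Submodule.mem_span_range_iff_exists_fun (MvPolynomial (Fin n) ℂ)).1 hmem
      set c : Fin n → ℂ := fun i => coeff 0 (h i) with hc
      have hterm : ∀ (γ'' : ↥S) i, coeff γ''.1 (h i * pderiv i f)
          = c i * coeff γ''.1 (pderiv i f) := by
        intro γ'' i
        rw [coeff_mul]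
        apply Finset.sum_eq_single_of_mem ((0 : Fin n →₀ ℕ), γ''.1)
        · rw [Finset.HasAntidiagonal.mem_antidiagonal, zero_add]
        · rintro ⟨u, v⟩ huv hne
          rw [Finset.HasAntidiagonal.mem_antidiagonal] at huv
          by_cases hv : coeff v (pderiv i f) = 0
          · rw [hv, mul_zero]
          · exfalso
            have hvE : v ∈ E := (hEc v).2 ⟨v + ee i,
              support_pderiv_mem (MvPolynomial.mem_support_iff.2 hv), i, rfl⟩
            obtain ⟨γ₁, hγ₁G, hγ₁le⟩ := hGmin v hvE
            have hvle : v ≤ γ''.1 := huv ▸ le_add_self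
            have hγ₁eq : γ₁ = γ''.1 := hAC γ''.1 (hSG γ''.2) γ₁ hγ₁G (le_trans hγ₁le hvle)
            have hveq : v = γ''.1 := le_antisymm hvle (hγ₁eq ▸ hγ₁le)
            have hu0 : u = 0 := by
              rw [hveq] at huv
              have : u + γ''.1 = 0 + γ''.1 := by rw [zero_add]; exact huv
              exact add_right_cancel this
            exact hne (Prod.ext hu0 hveq)
      have hfun : Pi.single γ₀ (1:ℂ) = ∑ i : Fin n, c i • rows i := by
        funext γ''
        rw [Finset.sum_apply]
        have hco := congrArg (coeff γ''.1) hh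
        rw [coeff_sum] at hco
        simp only [smul_eq_mul] at hco
        have hL : ∑ i : Fin n, coeff γ''.1 (h i * pderiv i f)
            = ∑ i : Fin n, c i * coeff γ''.1 (pderiv i f) :=
          Finset.sum_congr rfl (fun i _ => hterm γ'' i)
        rw [hL] at hco
        rw [coeff_monomial] at hco
        have : (Pi.single γ₀ (1:ℂ) : ↥S → ℂ) γ'' = if γ₀.1 = γ''.1 then (1:ℂ) else 0 := by
          rw [Pi.single_apply]
          by_cases hgg : γ'' = γ₀
          · rw [if_pos hgg, if_pos (by rw [hgg])]
          · rw [if_neg hgg, if_neg (fun hcc => hgg (Subtype.ext hcc.symm))]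
        rw [this, ← hco]
        rfl
      rw [hfun]
      rw [← Finset.sum_subset (Finset.subset_univ N)
        (fun i _ hi => by rw [hrows0 i hi, smul_zero])]
      rw [← Finset.sum_attach N (fun i => c i • rows i)]
      apply Submodule.sum_mem
      intro i _
      exact Submodule.smul_mem _ _ (Submodule.subset_span ⟨i, rfl⟩)
    -- dimension count
    have hLIpi : LinearIndependent ℂ (fun γ₀ : ↥S => Pi.single γ₀ (1:ℂ)) := by
      have hb := (Pi.basisFun ℂ ↥S).linearIndependent
      have hbe : ⇑(Pi.basisFun ℂ ↥S) = fun i : ↥S => Pi.single i (1:ℂ) :=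
        funext fun i => Pi.basisFun_apply ℂ ↥S i
      rwa [hbe] at hb
    set W := Submodule.span ℂ (Set.range (fun i : ↥N => rows i.1)) with hW
    have hFD : FiniteDimensional ℂ ↥W :=
      FiniteDimensional.span_of_finite ℂ (Set.finite_range _)
    have hw : LinearIndependent ℂ
        (fun γ₀ : ↥S => (⟨Pi.single γ₀ (1:ℂ), hsingle γ₀⟩ : ↥W)) := by
      apply LinearIndependent.of_comp W.subtype
      exact hLIpi
    have h1 : Fintype.card ↥S ≤ Module.finrank ℂ ↥W :=
      hw.fintype_card_le_finrank
    have h2 : Module.finrank ℂ ↥W ≤ Fintype.card ↥N :=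
      finrank_range_le_card _
    rw [Fintype.card_coe] at h1
    rw [Fintype.card_coe] at h2
    omega
  -- apply Hall's theorem
  have hHall := (Finset.all_card_le_biUnion_card_iff_exists_injective
    (fun γ : {x // x ∈ G} => T γ.1)).1 ?_
  · obtain ⟨σ', hσ'inj, hσ'mem⟩ := hHall
    obtain ⟨γw, hγw⟩ := hGne
    set σ : (Fin n →₀ ℕ) → Fin n :=
      fun γ => if h : γ ∈ G then σ' ⟨γ, h⟩ else σ' ⟨γw, hγw⟩ with hσ
    have hσval : ∀ γ (h : γ ∈ G), σ γ = σ' ⟨γ, h⟩ := by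
      intro γ h
      rw [hσ]
      simp [h]
    have hσsupp : ∀ γ ∈ G, γ + ee (σ γ) ∈ f.support := by
      intro γ h
      have := hσ'mem ⟨γ, h⟩
      rw [hT] at this
      rw [Finset.mem_filter] at this
      rw [hσval γ h]
      exact this.2
    refine ⟨G, σ, hAC, ?_, ?_, ⟨γw, hγw⟩, hJG⟩
    · intro γ hγ δ hδ heq
      rw [hσval γ hγ, hσval δ hδ] at heq
      have := hσ'inj heq
      exact congrArg Subtype.val this
    · intro γ hγ β' j heq
      have hβ'E : β' ∈ E := (hEc β').2 ⟨γ + ee (σ γ), hσsupp γ hγ, j, heq⟩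
      obtain ⟨δ, hδG, hδle⟩ := hGmin β' hβ'E
      exact ⟨δ, hδG, hδle⟩
  · intro s
    have := hall (s.image Subtype.val) (by
      rintro x hx
      rw [Finset.mem_image] at hx
      obtain ⟨⟨y, hy⟩, -, rfl⟩ := hx
      exact hy)
    rw [Finset.card_image_of_injective _ Subtype.val_injective] at this
    rw [Finset.image_biUnion] at this
    exact this

end Derive

end TSComb

/-- If `f` is nonconstant and its Jacobian ideal is a monomial ideal, then there
is a Thom–Sebastiani polynomial `f' = Σ_{α ∈ F'} x^α` (with `F'` a nonempty
finite set of nonzero exponent vectors with pairwise disjoint supports) whose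
Jacobian ideal equals that of `f`. -/
theorem monomial_jacobian_ideal_thom_sebastiani {n : ℕ}
    (f : MvPolynomial (Fin n) ℂ) (hf : ∀ c : ℂ, f ≠ C c)
    (hmono : ∃ B : Set (Fin n → ℕ),
      jacobianIdeal f = Ideal.span (mono '' B)) :
    ∃ F' : Finset (Fin n → ℕ), F'.Nonempty ∧ (∀ α ∈ F', α ≠ 0) ∧
      ((F' : Set (Fin n → ℕ)).Pairwise fun α α' =>
        Disjoint (Function.support α) (Function.support α')) ∧
      jacobianIdeal (∑ α ∈ F', mono α) = jacobianIdeal f := by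
  classical
  obtain ⟨G, σ, hAC, hInj, hStar, hGne, hJG⟩ := TSComb.exists_G_sigma f hf hmono
  obtain ⟨A, hAne, hA0, hAdisj, hAmem⟩ := TSComb.decomposition G σ hAC hInj hStar hGne
  have hequiv : ∀ a : Fin n →₀ ℕ, ⇑Finsupp.equivFunOnFinite a = ⇑a :=
    fun a => funext (fun i => Finsupp.equivFunOnFinite_apply a i)
  refine ⟨A.image ⇑Finsupp.equivFunOnFinite, hAne.image _, ?_, ?_, ?_⟩
  · intro α hα
    rw [Finset.mem_image] at hα
    obtain ⟨a, ha, rfl⟩ := hα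
    intro hc
    apply hA0 a ha
    ext i
    have := congrFun hc i
    rw [hequiv a] at this
    simpa using this
  · intro α hα α' hα' hne
    rw [Finset.mem_coe, Finset.mem_image] at hα hα'
    obtain ⟨a, ha, rfl⟩ := hα
    obtain ⟨a', ha', rfl⟩ := hα'
    have hane : a ≠ a' := fun h => hne (by rw [h])
    have hd := hAdisj a ha a' ha' hane
    rw [hequiv a, hequiv a', Finsupp.fun_support_eq, Finsupp.fun_support_eq,
      Finset.disjoint_coe]
    exact hd
  · have hsum : ∑ α ∈ A.image ⇑Finsupp.equivFunOnFinite, mono α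
        = ∑ a ∈ A, monomial a (1:ℂ) := by
      rw [Finset.sum_image (fun x _ y _ h => Finsupp.equivFunOnFinite.injective h)]
      apply Finset.sum_congr rfl
      intro a _
      show monomial (Finsupp.equivFunOnFinite.symm (Finsupp.equivFunOnFinite a)) 1 = _
      rw [Equiv.symm_apply_apply]
    rw [hsum, hJG]
    rw [jacobianIdeal]
    apply le_antisymm
    · apply Ideal.span_le.2
      rintro q ⟨i, rfl⟩
      show (pderiv i (∑ a ∈ A, monomial a (1:ℂ))) ∈ _
      rw [map_sum]
      apply Ideal.sum_mem
      intro a ha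
      rw [pderiv_monomial, one_mul]
      by_cases hai : a i = 0
      · rw [hai]
        rw [Nat.cast_zero, map_zero]
        exact Ideal.zero_mem _
      · have hγG : (a - TSComb.ee i) ∈ G :=
          (hAmem _).2 ⟨a, ha, i, TSComb.sub_ee_add (by omega)⟩
        have hCm : (monomial (a - Finsupp.single i 1) ((a i : ℂ))
            : MvPolynomial (Fin n) ℂ)
            = C ((a i : ℂ)) * monomial (a - TSComb.ee i) 1 := by
          rw [C_mul_monomial, mul_one]
          rfl
        rw [hCm]
        exact Ideal.mul_mem_left _ _ (Ideal.subset_span ⟨_, hγG, rfl⟩)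
    · apply Ideal.span_le.2
      rintro q ⟨γ, hγ, rfl⟩
      have hγG : γ ∈ G := hγ
      obtain ⟨a, ha, i, hai⟩ := (hAmem γ).1 hγG
      have hai1 : a i = γ i + 1 := by
        have := congrArg (fun (z : Fin n →₀ ℕ) => z i) hai
        simp only [TSComb.add_apply', TSComb.ee_apply_self] at this
        omega
      have hane0 : (a i : ℂ) ≠ 0 := by
        rw [hai1]
        push_cast
        exact Nat.cast_add_one_ne_zero (γ i)
      have hderiv : pderiv i (∑ a' ∈ A, monomial a' (1:ℂ))
          = monomial γ ((a i : ℂ)) := by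
        rw [map_sum]
        rw [Finset.sum_eq_single_of_mem a ha]
        · rw [pderiv_monomial, one_mul]
          have hsub : a - Finsupp.single i 1 = γ := by
            rw [← hai]
            exact add_tsub_cancel_right γ (TSComb.ee i)
          rw [hsub]
        · intro b hb hbne
          rw [pderiv_monomial, one_mul]
          have hbi : b i = 0 := by
            by_contra hcc
            have hia : i ∈ a.support := Finsupp.mem_support_iff.2 (by omega)
            have hib : i ∈ b.support := Finsupp.mem_support_iff.2 hcc
            exact (Finset.disjoint_left.1 (hAdisj a ha b hb (Ne.symm hbne))) hia hib
          rw [hbi, Nat.cast_zero, map_zero]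
      show (monomial γ 1 : MvPolynomial (Fin n) ℂ) ∈ _
      have hexp : (monomial γ (1:ℂ) : MvPolynomial (Fin n) ℂ)
          = C ((a i : ℂ))⁻¹ * monomial γ ((a i : ℂ)) := by
        rw [C_mul_monomial, inv_mul_cancel₀ hane0]
      rw [hexp, ← hderiv]
      exact Ideal.mul_mem_left _ _ (Ideal.subset_span ⟨i, rfl⟩)
end

section
/- Let f ∈ ℂ[x₁,…,xₙ] be nonzero and let χ be a ℂ-linear derivation of ℂ[x₁,…,xₙ] with χ(f) = f. Then every ℂ-linear derivation θ of ℂ[x₁,…,xₙ] with θ(f) ∈ ⟨f⟩ can be written uniquely as θ = g·χ + η, where g ∈ ℂ[x₁,…,xₙ] and η is a derivation with η(f) = 0. In other words, the ℂ[x₁,…,xₙ]-module Der(−log f) := {θ : θ(f) ∈ ⟨f⟩} decomposes as the direct sum of the free module ℂ[x₁,…,xₙ]·χ and the module {θ : θ(f) = 0} of derivations annihilating f. -/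
open MvPolynomial

/-- If `χ(f) = f` for a derivation `χ` and `f ≠ 0`, then every logarithmic
derivation `θ` (i.e. `θ(f) ∈ ⟨f⟩`) decomposes uniquely as `θ = g • χ + η`
with `η(f) = 0`: `Der(−log f) = ℂ[x]·χ ⊕ ann(f)`. -/
theorem logarithmic_derivations_decompose {n : ℕ}
    (f : MvPolynomial (Fin n) ℂ) (hf : f ≠ 0)
    (χ : Derivation ℂ (MvPolynomial (Fin n) ℂ) (MvPolynomial (Fin n) ℂ))
    (hχ : χ f = f) :
    ∀ θ : Derivation ℂ (MvPolynomial (Fin n) ℂ) (MvPolynomial (Fin n) ℂ),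
      θ f ∈ Ideal.span {f} →
      ∃! p : MvPolynomial (Fin n) ℂ ×
          Derivation ℂ (MvPolynomial (Fin n) ℂ) (MvPolynomial (Fin n) ℂ),
        θ = p.1 • χ + p.2 ∧ p.2 f = 0 := by
  intro θ hθ
  rw [Ideal.mem_span_singleton] at hθ
  obtain ⟨g, hg⟩ := hθ
  refine ⟨(g, θ - g • χ), ⟨?_, ?_⟩, ?_⟩
  · simp
  · simp [hχ, hg, mul_comm]
  · rintro ⟨p, η⟩ ⟨h1, h2⟩
    have hpf : θ f = p * f := by
      have := congrArg (fun d : Derivation ℂ (MvPolynomial (Fin n) ℂ)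
        (MvPolynomial (Fin n) ℂ) => d f) h1
      simpa [hχ, h2] using this
    have hp : p = g := by
      have : p * f = g * f := by rw [← hpf, hg, mul_comm]
      exact mul_right_cancel₀ hf this
    subst hp
    have : η = θ - p • χ := by
      rw [h1]; abel
    simp [this]
end

section
/- Let φ be a ℂ-algebra automorphism of ℂ[x₁,…,xₙ] and let f ∈ ℂ[x₁,…,xₙ]. Then the image under φ of the Jacobian ideal of f equals the Jacobian ideal of φ(f): Ideal.map φ (J_f) = J_{φ(f)}. -/
open MvPolynomial

/-- Chain rule for partial derivatives under an algebra endomorphism. -/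
lemma pderiv_algHom_apply {n : ℕ}
    (φ : MvPolynomial (Fin n) ℂ →ₐ[ℂ] MvPolynomial (Fin n) ℂ)
    (i : Fin n) (f : MvPolynomial (Fin n) ℂ) :
    pderiv i (φ f) = ∑ j, φ (pderiv j f) * pderiv i (φ (X j)) := by
  induction f using MvPolynomial.induction_on with
  | C a => simp
  | add p q hp hq => simp [map_add, hp, hq, add_mul, Finset.sum_add_distrib]
  | mul_X p j hp =>
      rw [map_mul, pderiv_mul, hp, Finset.sum_mul]
      have key : ∀ k : Fin n, φ (pderiv k (p * X j)) * pderiv i (φ (X k)) =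
          φ (pderiv k p) * pderiv i (φ (X k)) * φ (X j)
            + (if k = j then φ p * pderiv i (φ (X j)) else 0) := by
        intro k
        rw [pderiv_mul, map_add, add_mul, map_mul]
        rcases eq_or_ne k j with h | h
        · subst h
          simp only [pderiv_X_self, map_mul, map_one, mul_one, if_true]
          ring
        · simp only [pderiv_X_of_ne (Ne.symm h), mul_zero, map_zero, zero_mul,
            add_zero, if_neg h]
          ring
      rw [Finset.sum_congr rfl fun k _ => key k, Finset.sum_add_distrib,
        Finset.sum_ite_eq' Finset.univ j]
      simp

lemma jacobianIdeal_le_map {n : ℕ}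
    (φ : MvPolynomial (Fin n) ℂ ≃ₐ[ℂ] MvPolynomial (Fin n) ℂ)
    (f : MvPolynomial (Fin n) ℂ) :
    jacobianIdeal (φ f) ≤
      Ideal.map (φ : MvPolynomial (Fin n) ℂ →+* MvPolynomial (Fin n) ℂ)
        (jacobianIdeal f) := by
  rw [jacobianIdeal, Ideal.span_le]
  rintro _ ⟨i, rfl⟩
  have hc := pderiv_algHom_apply φ.toAlgHom i f
  change pderiv i (φ f) = ∑ j, φ (pderiv j f) * pderiv i (φ (X j)) at hc
  show pderiv i (φ f) ∈ _
  rw [hc]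
  refine Ideal.sum_mem _ fun j _ => Ideal.mul_mem_right _ _ ?_
  exact Ideal.mem_map_of_mem _ (Ideal.subset_span ⟨j, rfl⟩)

/-- The Jacobian ideal is an analytic invariant: for any `ℂ`-algebra
automorphism `φ`, `φ(J_f) = J_{φ(f)}`. -/
theorem jacobian_ideal_map_automorphism {n : ℕ}
    (φ : MvPolynomial (Fin n) ℂ ≃ₐ[ℂ] MvPolynomial (Fin n) ℂ)
    (f : MvPolynomial (Fin n) ℂ) :
    Ideal.map (φ : MvPolynomial (Fin n) ℂ →+* MvPolynomial (Fin n) ℂ)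
        (jacobianIdeal f) = jacobianIdeal (φ f) := by
  refine le_antisymm ?_ (jacobianIdeal_le_map φ f)
  have h := jacobianIdeal_le_map φ.symm (φ f)
  rw [AlgEquiv.symm_apply_apply] at h
  have := Ideal.map_mono (f := (φ : MvPolynomial (Fin n) ℂ →+* MvPolynomial (Fin n) ℂ)) h
  rwa [Ideal.map_map, show ((φ : MvPolynomial (Fin n) ℂ →+* _).comp
      (φ.symm : MvPolynomial (Fin n) ℂ →+* _)) = RingHom.id _ from
      RingHom.ext fun x => φ.apply_symm_apply x, Ideal.map_id] at this
end

section
/- Let F' ⊆ ℕ^n be a set of exponent vectors with pairwise disjoint supports such that |α| ≥ 2 for every α ∈ F'. Suppose that for every i ∈ Fin n there exists m ∈ ℕ with m·e_i ∈ J_{F'} (combinatorially, the Thom–Sebastiani polynomial Σ_{α ∈ F'} x^α has an isolated critical point at the origin). Then ⋃_{α ∈ F'} [α] = Fin n, and every α ∈ F' is of the form m·e_i with m ≥ 2, or of the form m·e_i + e_j with m ≥ 1 and i ≠ j. -/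
lemma key {n : ℕ} (F' : Set (Fin n → ℕ)) (hdeg : ∀ α ∈ F', 2 ≤ deg α)
    (i : Fin n) (m : ℕ) (h : (Pi.single i m : Fin n → ℕ) ∈ semigroupIdeal F') :
    ∃ α ∈ F', α i ≠ 0 ∧
      ((∃ m : ℕ, 2 ≤ m ∧ α = Pi.single i m) ∨
       (∃ j : Fin n, ∃ m : ℕ, 1 ≤ m ∧ i ≠ j ∧ α = Pi.single i m + Pi.single j 1)) := by
  obtain ⟨γ, ⟨α, hαF, k, hk, rfl⟩, hle⟩ := h
  have hz : ∀ j : Fin n, j ≠ i → α j - (Pi.single k 1 : Fin n → ℕ) j = 0 := by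
    intro j hj
    have := hle j
    simpa [Pi.single_eq_of_ne hj] using this
  by_cases hki : k = i
  · subst hki
    have hzero : ∀ j, j ≠ k → α j = 0 := by
      intro j hj
      have := hz j hj
      simpa [Pi.single_eq_of_ne hj] using this
    have hform : α = Pi.single k (α k) := by
      funext j
      by_cases hjk : j = k
      · subst hjk; simp
      · simp [Pi.single_eq_of_ne hjk, hzero j hjk]
    have hdegα : deg α = α k := by
      rw [hform]; simp [deg, Finset.sum_pi_single']
    refine ⟨α, hαF, ?_, Or.inl ⟨α k, ?_, hform⟩⟩
    · intro h0; have := hdeg α hαF; omega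
    · have := hdeg α hαF; omega
  · have hαk : α k = 1 := by
      have := hz k hki
      simp [Pi.single_eq_same] at this
      omega
    have hzero : ∀ j, j ≠ i → j ≠ k → α j = 0 := by
      intro j hj hjk
      have := hz j hj
      simpa [Pi.single_eq_of_ne hjk] using this
    have hform : α = Pi.single i (α i) + Pi.single k 1 := by
      funext j
      by_cases hji : j = i
      · subst hji; simp [Pi.single_eq_of_ne (fun h => hki h.symm)]
      · by_cases hjk : j = k
        · subst hjk; simp [Pi.single_eq_of_ne hji, hαk]
        · simp [Pi.single_eq_of_ne hji, Pi.single_eq_of_ne hjk, hzero j hji hjk]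
    have hdegα : deg α = α i + 1 := by
      rw [hform]; simp [deg, Finset.sum_add_distrib, Finset.sum_pi_single', Pi.single_eq_of_ne (fun h : i = k => hki h.symm)]
    refine ⟨α, hαF, ?_, Or.inr ⟨k, α i, ?_, fun h => hki h.symm, hform⟩⟩
    · intro h0; have := hdeg α hαF; omega
    · have := hdeg α hαF; omega

/-- Combinatorial version of K. Saito's criterion for isolated singularities:
if a Thom–Sebastiani support `F'` (pairwise disjoint supports, all degrees
`≥ 2`) satisfies `m·e_i ∈ J_{F'}` for every `i`, then the supports of `F'`
cover `Fin n` and every `α ∈ F'` is of the form `m·e_i` with `m ≥ 2` or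
`m·e_i + e_j` with `m ≥ 1`, `i ≠ j`. -/
theorem brieskorn_pham_criterion {n : ℕ} (F' : Set (Fin n → ℕ))
    (hdisj : F'.Pairwise fun α α' => Disjoint (Function.support α) (Function.support α'))
    (hdeg : ∀ α ∈ F', 2 ≤ deg α)
    (hiso : ∀ i : Fin n, ∃ m : ℕ, (Pi.single i m : Fin n → ℕ) ∈ semigroupIdeal F') :
    (⋃ α ∈ F', Function.support α) = Set.univ ∧
    ∀ α ∈ F',
      (∃ i : Fin n, ∃ m : ℕ, 2 ≤ m ∧ α = Pi.single i m) ∨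
      (∃ i j : Fin n, ∃ m : ℕ, 1 ≤ m ∧ i ≠ j ∧
        α = Pi.single i m + Pi.single j 1) := by
  have cover : ∀ i : Fin n, ∃ α ∈ F', α i ≠ 0 := by
    intro i
    obtain ⟨m, hm⟩ := hiso i
    obtain ⟨α, hαF, hαi, _⟩ := key F' hdeg i m hm
    exact ⟨α, hαF, hαi⟩
  constructor
  · ext i
    simp only [Set.mem_iUnion, Set.mem_univ, iff_true]
    obtain ⟨α, hαF, hαi⟩ := cover i
    exact ⟨α, hαF, hαi⟩
  · intro α hαF
    have h2 := hdeg α hαF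
    have : ∃ i, α i ≠ 0 := by
      by_contra h
      push_neg at h
      have : deg α = 0 := Finset.sum_eq_zero fun j _ => h j
      omega
    obtain ⟨i, hi⟩ := this
    obtain ⟨m, hm⟩ := hiso i
    obtain ⟨α', hα'F, hα'i, hform⟩ := key F' hdeg i m hm
    have heq : α = α' := by
      by_contra hne
      have := hdisj hαF hα'F hne
      exact (Set.disjoint_left.mp this hi) hα'i
    subst heq
    rcases hform with ⟨m, hm2, hform⟩ | ⟨j, m, hm1, hij, hform⟩
    · exact Or.inl ⟨i, m, hm2, hform⟩
    · exact Or.inr ⟨i, j, m, hm1, hij, hform⟩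
end
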